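/- Let g : ℝ → ℝ satisfy Conditions (G) for some 1 < α < 3/2, set σ = −g'(0), and define B[P](x) = g(P(x)) − 1 + σP(x). Then B maps L^{2α}(ℝ³) into L²(ℝ³) and is continuous; more precisely, there is a constant C such that for all P, Q ∈ L^{2α}(ℝ³): ‖B[P] − B[Q]‖_{L²(ℝ³)} ≤ C (‖P‖_{L^{2α}(ℝ³)} + ‖Q‖_{L^{2α}(ℝ³)})^{α−1} ‖P − Q‖_{L^{2α}(ℝ³)}. -/

import Mathlib

open MeasureTheory Real Set
open scoped ENNReal

noncomputable section

abbrev R3 : Type := EuclideanSpace ℝ (Fin 3)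

/-- Conditions (G) on g with exponent α. -/
def CondG (g : ℝ → ℝ) (α : ℝ) : Prop :=
  g 0 = 1 ∧
  ContDiff ℝ 2 g ∧
  (∀ r : ℝ, deriv g r < 0) ∧
  (∀ r : ℝ, g 0 + deriv g 0 * r ≤ g r) ∧
  ∃ C₁ : ℝ, 0 < C₁ ∧ ∃ C₂ : ℝ, 0 < C₂ ∧ ∀ r : ℝ,
    g r - (g 0 + deriv g 0 * r) ≤ C₁ * |r| ^ α ∧
    |deriv g r - deriv g 0| ≤ C₂ * |r| ^ (α - 1)

lemma mvt_bound {g : ℝ → ℝ} (hdiff : Differentiable ℝ g) {C₂ α : ℝ}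
    (hC₂ : 0 ≤ C₂) (hα : 0 ≤ α - 1)
    (hC : ∀ r : ℝ, |deriv g r - deriv g 0| ≤ C₂ * |r| ^ (α - 1)) (p q : ℝ) :
    |(g p - g q) - deriv g 0 * (p - q)| ≤ C₂ * (|p| + |q|) ^ (α - 1) * |p - q| := by
  have main : ∀ p q : ℝ, q < p →
      |(g p - g q) - deriv g 0 * (p - q)| ≤ C₂ * (|p| + |q|) ^ (α - 1) * |p - q| := by
    intro p q hqp
    obtain ⟨c, hc, hderiv⟩ := exists_deriv_eq_slope g hqp hdiff.continuous.continuousOn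
      (fun x _ => (hdiff x).differentiableWithinAt)
    have hpq : p - q ≠ 0 := by linarith
    have hgpq : g p - g q = deriv g c * (p - q) := by
      rw [hderiv]; field_simp
    have h1 : |(g p - g q) - deriv g 0 * (p - q)| = |deriv g c - deriv g 0| * |p - q| := by
      rw [← abs_mul]; congr 1; rw [hgpq]; ring
    rw [h1]
    have hcb : |c| ≤ |p| + |q| := by
      rcases hc with ⟨h1, h2⟩
      rw [abs_le]
      refine ⟨?_, ?_⟩
      · have := neg_abs_le q; linarith [abs_nonneg p]
      · have := le_abs_self p; linarith [abs_nonneg q]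
    have h2 : |deriv g c - deriv g 0| ≤ C₂ * (|p| + |q|) ^ (α - 1) := by
      refine (hC c).trans ?_
      exact mul_le_mul_of_nonneg_left (Real.rpow_le_rpow (abs_nonneg c) hcb hα) hC₂
    exact mul_le_mul_of_nonneg_right h2 (abs_nonneg _)
  rcases lt_trichotomy q p with h | h | h
  · exact main p q h
  · subst h; simp [mul_nonneg, hC₂, Real.rpow_nonneg, abs_nonneg]
  · have := main q p h
    have e1 : |(g p - g q) - deriv g 0 * (p - q)| = |(g q - g p) - deriv g 0 * (q - p)| := by
      rw [← abs_neg]; congr 1; ring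
    rw [e1, add_comm |p| |q|, abs_sub_comm p q]
    exact this

/-- Continuity of the operator B (Lemma 3.1): with σ = −g'(0) and
B[P] = g∘P − 1 + σP, the operator B maps L^{2α}(ℝ³) into L²(ℝ³) and
‖B[P] − B[Q]‖_{L²} ≤ C(‖P‖_{L^{2α}} + ‖Q‖_{L^{2α}})^{α−1}‖P − Q‖_{L^{2α}}. -/
theorem B_maps_L2alpha_to_L2_continuously
    (g : ℝ → ℝ) (α : ℝ) (hα : 1 < α) (hα' : α < 3 / 2) (hg : CondG g α) :
    ∃ C : ℝ, 0 < C ∧ ∀ P Q : R3 → ℝ,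
      MemLp P (ENNReal.ofReal (2 * α)) (volume : Measure R3) →
      MemLp Q (ENNReal.ofReal (2 * α)) (volume : Measure R3) →
      MemLp (fun x => g (P x) - 1 + -deriv g 0 * P x) 2 (volume : Measure R3) ∧
      eLpNorm
          (fun x => (g (P x) - 1 + -deriv g 0 * P x) - (g (Q x) - 1 + -deriv g 0 * Q x)) 2
          (volume : Measure R3) ≤
        ENNReal.ofReal
          (C * ((eLpNorm P (ENNReal.ofReal (2 * α)) volume).toReal +
                (eLpNorm Q (ENNReal.ofReal (2 * α)) volume).toReal) ^ (α - 1) *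
            (eLpNorm (fun x => P x - Q x) (ENNReal.ofReal (2 * α)) volume).toReal) := by
  obtain ⟨hg0, hg2, hneg, hconv, C₁, hC₁, C₂, hC₂, hbd⟩ := hg
  have hdiff : Differentiable ℝ g := hg2.differentiable (by norm_num)
  have hα1 : (0:ℝ) ≤ α - 1 := by linarith
  have hα0 : (0:ℝ) < α := by linarith
  have key := mvt_bound hdiff hC₂.le hα1 (fun r => (hbd r).2)
  set d := deriv g 0 with hd
  set p2α := ENNReal.ofReal (2 * α) with hp2α
  have hp2α1 : (1:ℝ≥0∞) ≤ p2α := ENNReal.one_le_ofReal.2 (by linarith)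
  refine ⟨C₂, hC₂, fun P Q hP hQ => ?_⟩
  -- measurability of B[P]
  have hBm : ∀ (P : R3 → ℝ), MemLp P p2α (volume : Measure R3) →
      AEStronglyMeasurable (fun x => g (P x) - 1 + -d * P x) (volume : Measure R3) := by
    intro P hP
    exact ((hg2.continuous.comp_aestronglyMeasurable hP.1).sub
      aestronglyMeasurable_const).add (hP.1.const_mul _)
  -- pointwise bound rewritten for B
  have keyB : ∀ (P Q : R3 → ℝ) (x : R3),
      ‖(g (P x) - 1 + -d * P x) - (g (Q x) - 1 + -d * Q x)‖ ≤
        C₂ * (|P x| + |Q x|) ^ (α - 1) * |P x - Q x| := by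
    intro P Q x
    have e : (g (P x) - 1 + -d * P x) - (g (Q x) - 1 + -d * Q x)
        = (g (P x) - g (Q x)) - d * (P x - Q x) := by ring
    rw [Real.norm_eq_abs, e]
    exact key (P x) (Q x)
  -- Membership part: |B[P] x| ≤ C₂ * |P x|^α
  have hmemBP : MemLp (fun x => g (P x) - 1 + -d * P x) 2 (volume : Measure R3) := by
    have hb : ∀ x : R3, ‖g (P x) - 1 + -d * P x‖ ≤ ‖C₂ * ‖P x‖ ^ α‖ := by
      intro x
      have := keyB P 0 x
      simp only [Pi.zero_apply, abs_zero, add_zero, sub_zero] at this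
      have e0 : g (0:ℝ) - 1 + -d * 0 = 0 := by simp [hg0]
      rw [e0, sub_zero] at this
      have e1 : |P x| ^ (α - 1) * |P x| = |P x| ^ α := by
        nth_rewrite 2 [← Real.rpow_one |P x|]
        rw [← Real.rpow_add' (abs_nonneg _) (by linarith)]
        ring_nf
      calc ‖g (P x) - 1 + -d * P x‖ ≤ C₂ * |P x| ^ (α - 1) * |P x| := this
        _ = C₂ * |P x| ^ α := by rw [mul_assoc, e1]
        _ ≤ ‖C₂ * ‖P x‖ ^ α‖ := by
            rw [Real.norm_eq_abs, Real.norm_eq_abs]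
            exact le_abs_self _
    have hmem : MemLp (fun x => C₂ * ‖P x‖ ^ α) 2 (volume : Measure R3) := by
      have h1 := (hP.norm_rpow_div (ENNReal.ofReal α)).const_mul C₂
      have hdiv : p2α / ENNReal.ofReal α = 2 := by
        rw [hp2α, ← ENNReal.ofReal_div_of_pos hα0]
        rw [mul_div_assoc, div_self hα0.ne', mul_one]
        norm_num
      rw [hdiv, ENNReal.toReal_ofReal hα0.le] at h1
      exact h1
    exact hmem.of_le (hBm P hP) (Filter.Eventually.of_forall hb)
  refine ⟨hmemBP, ?_⟩
  -- Now the main inequality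
  set A := eLpNorm P p2α (volume : Measure R3) with hA
  set B := eLpNorm Q p2α (volume : Measure R3) with hB
  set D := eLpNorm (fun x => P x - Q x) p2α (volume : Measure R3) with hD
  set φ : R3 → ℝ := fun x => C₂ * (|P x| + |Q x|) ^ (α - 1) with hφ
  set q := ENNReal.ofReal (2 * α / (α - 1)) with hq
  have hrpc : Continuous (fun t : ℝ => t ^ (α - 1)) := Real.continuous_rpow_const hα1
  have hφm : AEStronglyMeasurable φ (volume : Measure R3) :=
    (hrpc.comp_aestronglyMeasurable (hP.1.norm.add hQ.1.norm)).const_mul C₂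
  have hfm : AEStronglyMeasurable (fun x => P x - Q x) (volume : Measure R3) := hP.1.sub hQ.1
  have hpqr : (1:ℝ≥0∞) / 2 = 1 / q + 1 / p2α := by
    rw [hq, hp2α, one_div, one_div, one_div,
      ← ENNReal.ofReal_inv_of_pos (show (0:ℝ) < 2 * α / (α - 1) from
        div_pos (by linarith) (by linarith)),
      ← ENNReal.ofReal_inv_of_pos (show (0:ℝ) < 2 * α from by linarith),
      ← ENNReal.ofReal_add (by positivity) (by positivity),
      show (2:ℝ≥0∞) = ENNReal.ofReal 2 by norm_num,
      ← ENNReal.ofReal_inv_of_pos (by norm_num)]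
    congr 1
    have h1 : α - 1 ≠ 0 := by linarith
    have h2 : α ≠ 0 := by linarith
    field_simp
    ring
  have step1 : eLpNorm
      (fun x => (g (P x) - 1 + -d * P x) - (g (Q x) - 1 + -d * Q x)) 2
      (volume : Measure R3) ≤ eLpNorm (φ • fun x => P x - Q x) 2 (volume : Measure R3) := by
    refine eLpNorm_mono fun x => ?_
    refine (keyB P Q x).trans (le_of_eq ?_)
    have hnn : (0:ℝ) ≤ (|P x| + |Q x|) ^ (α - 1) := Real.rpow_nonneg (by positivity) _
    simp only [Pi.smul_apply, Pi.mul_apply, smul_eq_mul, Real.norm_eq_abs, abs_mul, hφ,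
      abs_of_nonneg hC₂.le, abs_of_nonneg hnn]
  have step2 := eLpNorm_smul_le_mul_eLpNorm (p := q) (q := p2α) (r := 2) hfm hφm
    (hpqr := ⟨by simpa only [one_div] using hpqr.symm⟩)
  -- eLpNorm φ q ≤ ofReal C₂ * (A + B) ^ (α - 1)
  have step3 : eLpNorm φ q (volume : Measure R3) ≤
      ENNReal.ofReal C₂ * (A + B) ^ (α - 1) := by
    have hψ : φ = C₂ • fun x => ‖|P x| + |Q x|‖ ^ (α - 1) := by
      funext x
      simp only [Pi.smul_apply, smul_eq_mul, hφ]
      rw [Real.norm_of_nonneg (by positivity)]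
    rw [hψ, eLpNorm_const_smul]
    have hrw := eLpNorm_norm_rpow (μ := (volume : Measure R3)) (p := q)
      (fun x => |P x| + |Q x|) (by linarith : (0:ℝ) < α - 1)
    have hqmul : q * ENNReal.ofReal (α - 1) = p2α := by
      rw [hq, hp2α, ← ENNReal.ofReal_mul (by positivity)]
      congr 1
      exact div_mul_cancel₀ _ (by linarith)
    rw [hqmul] at hrw
    rw [hrw]
    have htri : eLpNorm (fun x => |P x| + |Q x|) p2α (volume : Measure R3) ≤ A + B := by
      have := eLpNorm_add_le (hP.1.norm) (hQ.1.norm) hp2α1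
      calc eLpNorm (fun x => |P x| + |Q x|) p2α (volume : Measure R3)
          = eLpNorm (fun x => ‖P x‖ + ‖Q x‖) p2α (volume : Measure R3) := by
            simp [Real.norm_eq_abs]
        _ ≤ eLpNorm (fun x => ‖P x‖) p2α (volume : Measure R3)
            + eLpNorm (fun x => ‖Q x‖) p2α (volume : Measure R3) := this
        _ = A + B := by rw [eLpNorm_norm, eLpNorm_norm]
    calc (‖C₂‖₊ : ℝ≥0∞) * eLpNorm (fun x => |P x| + |Q x|) p2α (volume : Measure R3) ^ (α - 1)
        ≤ (‖C₂‖₊ : ℝ≥0∞) * (A + B) ^ (α - 1) := by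
          exact mul_le_mul_right (ENNReal.rpow_le_rpow htri hα1) _
      _ = ENNReal.ofReal C₂ * (A + B) ^ (α - 1) := by
          rw [← ENNReal.ofReal_coe_nnreal, coe_nnnorm, Real.norm_of_nonneg hC₂.le]
  -- finiteness
  have hAfin : A ≠ ⊤ := hP.2.ne
  have hBfin : B ≠ ⊤ := hQ.2.ne
  have hDfin : D ≠ ⊤ := (hP.sub hQ).2.ne
  have hRHS : ENNReal.ofReal (C₂ * (A.toReal + B.toReal) ^ (α - 1) * D.toReal)
      = ENNReal.ofReal C₂ * (A + B) ^ (α - 1) * D := by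
    rw [ENNReal.ofReal_mul (by positivity), ENNReal.ofReal_mul hC₂.le,
      ← ENNReal.ofReal_rpow_of_nonneg (by positivity) hα1,
      ENNReal.ofReal_add ENNReal.toReal_nonneg ENNReal.toReal_nonneg,
      ENNReal.ofReal_toReal hAfin, ENNReal.ofReal_toReal hBfin,
      ENNReal.ofReal_toReal hDfin]
  rw [hRHS]
  calc eLpNorm (fun x => (g (P x) - 1 + -d * P x) - (g (Q x) - 1 + -d * Q x)) 2
        (volume : Measure R3)
      ≤ eLpNorm (φ • fun x => P x - Q x) 2 (volume : Measure R3) := step1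
    _ ≤ eLpNorm φ q (volume : Measure R3) * D := step2
    _ ≤ (ENNReal.ofReal C₂ * (A + B) ^ (α - 1)) * D := by gcongr

end
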